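/- The Narayana triangle, i.e., the matrix N with N(n,k) = N(n+1,k+1) = (1/(n+1))·C(n+1,k+1)·C(n+1,k) for n ≥ k ≥ 0, is an SDR-matrix of order m for every m ≥ 3. -/

import Mathlib

open Finset

private def T (a : ℕ) : ℚ := ∏ j ∈ Finset.range a, (Nat.factorial j : ℚ)

private def G (n k r : ℕ) : ℚ :=
  ∏ i ∈ Finset.range (r+1),
    ((Nat.choose (n+1+i) (k+(r-i)+1) : ℚ) * (Nat.choose (n+1+i) (k+(r-i)) : ℚ))

private lemma fact_ne (a : ℕ) : ((Nat.factorial a : ℚ)) ≠ 0 := by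
  exact_mod_cast (Nat.factorial_ne_zero a)

private lemma T_ne (a : ℕ) : T a ≠ 0 :=
  Finset.prod_ne_zero_iff.2 fun j _ => fact_ne j

private lemma T_succ (a : ℕ) : T (a+1) = T a * (Nat.factorial a : ℚ) :=
  Finset.prod_range_succ _ a

private lemma G_eq_zero {n k r : ℕ} (h : n < k + r) : G n k r = 0 := by
  unfold G
  apply Finset.prod_eq_zero (Finset.mem_range.2 (Nat.succ_pos r))
  have h0 : Nat.choose (n+1+0) (k+(r-0)+1) = 0 := Nat.choose_eq_zero_of_lt (by omega)
  rw [h0]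
  norm_num

private lemma G_succ (n k r : ℕ) :
    G n k (r+1) =
      ((Nat.choose (n+1) (k+r+2) : ℚ) * (Nat.choose (n+1) (k+r+1) : ℚ)) * G (n+1) k r := by
  unfold G
  rw [Finset.prod_range_succ']
  have h2 : ∀ i ∈ Finset.range (r+1),
      ((Nat.choose (n+1+(i+1)) (k+(r+1-(i+1))+1) : ℚ) * (Nat.choose (n+1+(i+1)) (k+(r+1-(i+1))) : ℚ)) =
      ((Nat.choose (n+1+1+i) (k+(r-i)+1) : ℚ) * (Nat.choose (n+1+1+i) (k+(r-i)) : ℚ)) := by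
    intro i hi
    rw [show n+1+(i+1) = n+1+1+i from by omega, show r+1-(i+1) = r - i from by omega]
  rw [Finset.prod_congr rfl h2,
      show n+1+0 = n+1 from rfl, show r+1-0 = r+1 from rfl,
      show k+(r+1)+1 = k+r+2 from by ring, show k+(r+1) = k+r+1 from by ring]
  ring

private lemma G_formula (k r d : ℕ) :
    G (k+r+d) k r =
      (T (k+r+d+r+2) / T (k+r+d+1))^2 /
        ((T (k+r+1)/T k) * (T (k+r+2)/T (k+1)) * (T (d+2*r+2)/T d)) := by
  induction r generalizing d with
  | zero =>
    unfold G
    rw [Finset.prod_range_one]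
    simp only [Nat.sub_self, Nat.add_zero, Nat.sub_zero, Nat.mul_zero, Nat.zero_add]
    rw [Nat.cast_choose ℚ (show k+1 ≤ k+d+1 by omega),
        Nat.cast_choose ℚ (show k ≤ k+d+1 by omega),
        show k+d+1-(k+1) = d from by omega, show k+d+1-k = d+1 from by omega,
        show k+d+2 = k+d+1+1 from by ring, show k+2 = k+1+1 from by ring,
        show d+2 = d+1+1 from by ring]
    simp only [T_succ]
    field_simp [T_ne, fact_ne]
    try rw [div_eq_div_iff (by repeat' first | apply mul_ne_zero | apply pow_ne_zero | exact T_ne _ | exact fact_ne _)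
      (by repeat' first | apply mul_ne_zero | apply pow_ne_zero | exact T_ne _ | exact fact_ne _)]
  | succ r ih =>
    rw [G_succ,
        Nat.cast_choose ℚ (show k+r+2 ≤ k+(r+1)+d+1 by omega),
        Nat.cast_choose ℚ (show k+r+1 ≤ k+(r+1)+d+1 by omega),
        show k+(r+1)+d+1-(k+r+2) = d from by omega,
        show k+(r+1)+d+1-(k+r+1) = d+1 from by omega,
        show k+(r+1)+d+1 = k+r+(d+2) from by ring,
        ih (d+2),
        show k+(r+1)+d+(r+1)+2 = k+r+(d+2)+r+2 from by ring,
        show d+2*(r+1)+2 = d+2+2*r+2 from by ring,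
        show k+(r+1)+1 = k+r+1+1 from by ring,
        show k+(r+1)+2 = k+r+2+1 from by ring,
        show d+2 = d+1+1 from by ring]
    simp only [T_succ]
    field_simp [T_ne, fact_ne]
    try rw [div_eq_div_iff (by repeat' first | apply mul_ne_zero | apply pow_ne_zero | exact T_ne _ | exact fact_ne _)
      (by repeat' first | apply mul_ne_zero | apply pow_ne_zero | exact T_ne _ | exact fact_ne _)]

private lemma key (n k r s : ℕ) :
    G n k r * G (n+r+1) (k+r+1) s = G (n+s+1) (k+s+1) r * G n k s := by
  rcases lt_or_ge n (k+r) with h | hkr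
  · rw [G_eq_zero h, G_eq_zero (show n+s+1 < (k+s+1) + r by omega), zero_mul, zero_mul]
  rcases lt_or_ge n (k+s) with h | hks
  · rw [G_eq_zero h, G_eq_zero (show n+r+1 < (k+r+1) + s by omega), mul_zero, mul_zero]
  obtain ⟨d1, hd1⟩ : ∃ d, n = k + r + d := ⟨n - (k+r), by omega⟩
  obtain ⟨d2, hd2⟩ : ∃ d, n = k + s + d := ⟨n - (k+s), by omega⟩
  have e1 := G_formula k r d1
  rw [← hd1] at e1
  have e2 := G_formula k s d2
  rw [← hd2] at e2
  have e3 := G_formula (k+r+1) s d2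
  rw [show k+r+1+s+d2 = n+r+1 from by omega] at e3
  have e4 := G_formula (k+s+1) r d1
  rw [show k+s+1+r+d1 = n+s+1 from by omega] at e4
  rw [e1, e2, e3, e4]
  rw [show n+r+1+s+2 = n+r+s+3 from by ring,
      show n+s+1+r+2 = n+r+s+3 from by ring,
      show n+r+1+1 = n+r+2 from by ring,
      show n+s+1+1 = n+s+2 from by ring,
      show k+r+1+s+1 = k+r+s+2 from by ring,
      show k+s+1+r+1 = k+r+s+2 from by ring,
      show k+r+1+s+2 = k+r+s+3 from by ring,
      show k+s+1+r+2 = k+r+s+3 from by ring,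
      show k+r+1+1 = k+r+2 from by ring,
      show k+s+1+1 = k+s+2 from by ring]
  field_simp [T_ne, fact_ne]
  try rw [div_eq_div_iff (by repeat' first | apply mul_ne_zero | apply pow_ne_zero | exact T_ne _ | exact fact_ne _)
    (by repeat' first | apply mul_ne_zero | apply pow_ne_zero | exact T_ne _ | exact fact_ne _)]

/-- `A` is an SDR-matrix of order `m`: the generalized Star of David rule holds for
all `2 ≤ p ≤ m-1` and `0 ≤ r ≤ p-1`. -/
def IsSDR (m : ℕ) (A : ℕ → ℕ → ℚ) : Prop :=
  ∀ n k p r : ℕ, 2 ≤ p → p ≤ m - 1 → r ≤ p - 1 →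
    (∏ i ∈ Finset.range (r+1), A (n+i) (k+r-i)) *
      (∏ i ∈ Finset.range (p-r), A (n+p-i) (k+r+i+1)) =
    (∏ i ∈ Finset.range (r+1), A (n+p-i) (k+p-r+i)) *
      (∏ i ∈ Finset.range (p-r), A (n+i) (k+p-r-i-1))

private lemma scalar_merge (n a b : ℕ) :
    (∏ i ∈ Finset.range (a+1), (1:ℚ)/((n:ℚ)+i+1)) *
      (∏ i ∈ Finset.range (b+1), (1:ℚ)/((n:ℚ)+a+1+i+1)) =
    ∏ i ∈ Finset.range (a+b+2), (1:ℚ)/((n:ℚ)+i+1) := by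
  rw [show a+b+2 = (a+1)+(b+1) from by ring,
      Finset.prod_range_add (fun i => (1:ℚ)/((n:ℚ)+i+1)) (a+1) (b+1)]
  congr 1
  refine Finset.prod_congr rfl fun i _ => ?_
  push_cast
  ring_nf

theorem narayana_triangle_isSDR (m : ℕ) (hm : 3 ≤ m) :
    IsSDR m (fun n k =>
      (1 / (n+1) : ℚ) * Nat.choose (n+1) (k+1) * Nat.choose (n+1) k) := by
  intro n k p r hp2 hpm hr
  obtain ⟨s, hs⟩ : ∃ s, p = r + s + 1 := ⟨p - r - 1, by omega⟩
  subst hs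
  dsimp only
  rw [show r + s + 1 - r = s + 1 from by omega]
  have E1 : (∏ i ∈ Finset.range (r+1),
      1 / ((n + i : ℕ) + (1:ℚ)) * ((n + i + 1).choose (k + r - i + 1) : ℚ) * ((n + i + 1).choose (k + r - i) : ℚ)) =
      (∏ i ∈ Finset.range (r+1), (1:ℚ)/((n:ℚ)+i+1)) * G n k r := by
    rw [G, ← Finset.prod_mul_distrib]
    refine Finset.prod_congr rfl fun i hi => ?_
    have hir : i ≤ r := by have := Finset.mem_range.1 hi; omega
    rw [show n+i+1 = n+1+i from by omega, show k+r-i = k+(r-i) from by omega]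
    push_cast
    ring
  have E4 : (∏ i ∈ Finset.range (s+1),
      1 / ((n + i : ℕ) + (1:ℚ)) * ((n + i + 1).choose (k + (r+s+1) - r - i - 1 + 1) : ℚ) *
        ((n + i + 1).choose (k + (r+s+1) - r - i - 1) : ℚ)) =
      (∏ i ∈ Finset.range (s+1), (1:ℚ)/((n:ℚ)+i+1)) * G n k s := by
    rw [G, ← Finset.prod_mul_distrib]
    refine Finset.prod_congr rfl fun i hi => ?_
    have his : i ≤ s := by have := Finset.mem_range.1 hi; omega
    rw [show n+i+1 = n+1+i from by omega, show k+(r+s+1)-r-i-1 = k+(s-i) from by omega]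
    push_cast
    ring
  have E2 : (∏ i ∈ Finset.range (s+1),
      1 / ((n + (r+s+1) - i : ℕ) + (1:ℚ)) * ((n + (r+s+1) - i + 1).choose (k + r + i + 1 + 1) : ℚ) *
        ((n + (r+s+1) - i + 1).choose (k + r + i + 1) : ℚ)) =
      (∏ i ∈ Finset.range (s+1), (1:ℚ)/((n:ℚ)+r+1+i+1)) * G (n+r+1) (k+r+1) s := by
    rw [G, ← Finset.prod_mul_distrib]
    conv_lhs => rw [← Finset.prod_range_reflect]
    refine Finset.prod_congr rfl fun i hi => ?_
    have his : i ≤ s := by have := Finset.mem_range.1 hi; omega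
    rw [show n + (r+s+1) - (s+1-1-i) = n+r+1+i from by omega,
        show k + r + (s+1-1-i) + 1 + 1 = k+r+1+(s-i)+1 from by omega,
        show k + r + (s+1-1-i) + 1 = k+r+1+(s-i) from by omega,
        show n+r+1+i+1 = n+r+1+1+i from by omega]
    push_cast
    ring
  have E3 : (∏ i ∈ Finset.range (r+1),
      1 / ((n + (r+s+1) - i : ℕ) + (1:ℚ)) * ((n + (r+s+1) - i + 1).choose (k + (r+s+1) - r + i + 1) : ℚ) *
        ((n + (r+s+1) - i + 1).choose (k + (r+s+1) - r + i) : ℚ)) =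
      (∏ i ∈ Finset.range (r+1), (1:ℚ)/((n:ℚ)+s+1+i+1)) * G (n+s+1) (k+s+1) r := by
    rw [G, ← Finset.prod_mul_distrib]
    conv_lhs => rw [← Finset.prod_range_reflect]
    refine Finset.prod_congr rfl fun i hi => ?_
    have hir : i ≤ r := by have := Finset.mem_range.1 hi; omega
    rw [show n + (r+s+1) - (r+1-1-i) = n+s+1+i from by omega,
        show k + (r+s+1) - r + (r+1-1-i) + 1 = k+s+1+(r-i)+1 from by omega,
        show k + (r+s+1) - r + (r+1-1-i) = k+s+1+(r-i) from by omega,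
        show n+s+1+i+1 = n+s+1+1+i from by omega]
    push_cast
    ring
  rw [E1, E2, E3, E4]
  have SC : (∏ i ∈ Finset.range (r+1), (1:ℚ)/((n:ℚ)+i+1)) *
      (∏ i ∈ Finset.range (s+1), (1:ℚ)/((n:ℚ)+r+1+i+1)) =
      (∏ i ∈ Finset.range (r+1), (1:ℚ)/((n:ℚ)+s+1+i+1)) *
      (∏ i ∈ Finset.range (s+1), (1:ℚ)/((n:ℚ)+i+1)) := by
    rw [scalar_merge n r s, mul_comm, scalar_merge n s r, show s+r+2 = r+s+2 from by ring]
  calc (∏ i ∈ Finset.range (r+1), (1:ℚ)/((n:ℚ)+i+1)) * G n k r *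
        ((∏ i ∈ Finset.range (s+1), (1:ℚ)/((n:ℚ)+r+1+i+1)) * G (n+r+1) (k+r+1) s)
      = ((∏ i ∈ Finset.range (r+1), (1:ℚ)/((n:ℚ)+i+1)) *
          (∏ i ∈ Finset.range (s+1), (1:ℚ)/((n:ℚ)+r+1+i+1))) *
        (G n k r * G (n+r+1) (k+r+1) s) := by ring
    _ = ((∏ i ∈ Finset.range (r+1), (1:ℚ)/((n:ℚ)+s+1+i+1)) *
          (∏ i ∈ Finset.range (s+1), (1:ℚ)/((n:ℚ)+i+1))) *
        (G (n+s+1) (k+s+1) r * G n k s) := by rw [SC, key]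
    _ = (∏ i ∈ Finset.range (r+1), (1:ℚ)/((n:ℚ)+s+1+i+1)) * G (n+s+1) (k+s+1) r *
        ((∏ i ∈ Finset.range (s+1), (1:ℚ)/((n:ℚ)+i+1)) * G n k s) := by ring
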